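/- For a cubic Hamiltonian vector field f = J∇H on ℝ^n, the Kahan map preserves the measure dx₁∧…∧dx_n / det(I − (ε/2)f'(x)); equivalently, the Jacobian determinant of Φ_f(·,ε) at x equals det(I − (ε/2)f'(Φ_f(x,ε))) / det(I − (ε/2)f'(x)). -/

import Mathlib

open Matrix

open MvPolynomial

namespace KahanAux

noncomputable def evalD {n : ℕ} (r : MvPolynomial (Fin n) ℝ) (x : Fin n → ℝ) :
    (Fin n → ℝ) →L[ℝ] ℝ :=
  ∑ k, MvPolynomial.eval x (pderiv k r) • (ContinuousLinearMap.proj k)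

lemma evalD_apply {n : ℕ} (r : MvPolynomial (Fin n) ℝ) (x v : Fin n → ℝ) :
    evalD r x v = ∑ k, MvPolynomial.eval x (pderiv k r) * v k := by
  simp [evalD]

lemma hasFDerivAt_eval {n : ℕ} (r : MvPolynomial (Fin n) ℝ) (x : Fin n → ℝ) :
    HasFDerivAt (fun y => MvPolynomial.eval y r) (evalD r x) x := by
  induction r using MvPolynomial.induction_on with
  | C a =>
      have h0 : evalD (C a) x = 0 := by ext v; simp [evalD_apply]
      rw [h0]
      simpa using hasFDerivAt_const (a) x
  | add p q hp hq =>
      have h0 : evalD (p + q) x = evalD p x + evalD q x := by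
        ext v; simp [evalD_apply, add_mul, Finset.sum_add_distrib]
      rw [h0]
      simpa using hp.fun_add hq
  | mul_X p i hp =>
      have hX : HasFDerivAt (fun y : Fin n → ℝ => y i)
          (ContinuousLinearMap.proj i : (Fin n → ℝ) →L[ℝ] ℝ) x :=
        (ContinuousLinearMap.proj i : (Fin n → ℝ) →L[ℝ] ℝ).hasFDerivAt
      have h := hp.fun_mul hX
      have h0 : evalD (p * X i) x =
          (MvPolynomial.eval x p) • (ContinuousLinearMap.proj (R := ℝ) (φ := fun _ : Fin n => ℝ) i)
            + x i • evalD p x := by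
        ext v
        simp only [evalD_apply, ContinuousLinearMap.add_apply, ContinuousLinearMap.smul_apply,
          ContinuousLinearMap.proj_apply, smul_eq_mul]
        have key : ∀ k : Fin n, MvPolynomial.eval x (pderiv k (p * X i)) * v k
            = MvPolynomial.eval x (pderiv k p) * x i * v k
              + (if i = k then MvPolynomial.eval x p * v k else 0) := by
          intro k
          rw [pderiv_mul]
          rcases eq_or_ne i k with h | h
          · subst h; simp [pderiv_X_self]; ring
          · simp [pderiv_X_of_ne (Ne.symm h), h]
        rw [Finset.sum_congr rfl fun k _ => key k, Finset.sum_add_distrib,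
          Finset.sum_ite_eq]
        have hs : ∑ k, MvPolynomial.eval x (pderiv k p) * x i * v k
            = ∑ k, x i * (MvPolynomial.eval x (pderiv k p) * v k) :=
          Finset.sum_congr rfl fun k _ => by ring
        rw [hs, ← Finset.mul_sum]
        simp [evalD_apply]
        ring
      rw [h0]
      simpa using h

lemma differentiable_eval {n : ℕ} (r : MvPolynomial (Fin n) ℝ) :
    Differentiable ℝ (fun y : Fin n → ℝ => MvPolynomial.eval y r) :=
  fun x => (hasFDerivAt_eval r x).differentiableAt

lemma fderiv_eval {n : ℕ} (r : MvPolynomial (Fin n) ℝ) (x : Fin n → ℝ) :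
    fderiv ℝ (fun y => MvPolynomial.eval y r) x = evalD r x :=
  (hasFDerivAt_eval r x).fderiv

/-- coefficient formula for pderiv -/
lemma coeff_pderiv {n : ℕ} (r : MvPolynomial (Fin n) ℝ) (k : Fin n) (m : Fin n →₀ ℕ) :
    coeff m (pderiv k r) = (m k + 1 : ℕ) * coeff (m + Finsupp.single k 1) r := by
  induction r using MvPolynomial.induction_on' with
  | add p q hp hq => simp [hp, hq, mul_add]
  | monomial s a =>
      rw [pderiv_monomial, coeff_monomial, coeff_monomial]
      rcases eq_or_ne s (m + Finsupp.single k 1) with h | h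
      · subst h
        have h1 : m + Finsupp.single k 1 - Finsupp.single k 1 = m := by simp
        rw [if_pos h1, if_pos rfl]
        simp [Finsupp.add_apply, Finsupp.single_eq_same]
        ring
      · rw [if_neg h, mul_zero]
        by_cases hsk : s k = 0
        · by_cases h1 : s - Finsupp.single k 1 = m
          · rw [if_pos h1, hsk]; simp
          · rw [if_neg h1]
        · by_cases h1 : s - Finsupp.single k 1 = m
          · exfalso
            apply h
            have hle : Finsupp.single k 1 ≤ s := by
              rw [Finsupp.single_le_iff]; omega
            rw [tsub_eq_iff_eq_add_of_le hle] at h1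
            exact h1
          · rw [if_neg h1]


lemma coeff_pderiv_ne_zero {n : ℕ} {r : MvPolynomial (Fin n) ℝ} {k : Fin n} {m : Fin n →₀ ℕ}
    (h : coeff m (pderiv k r) ≠ 0) :
    (m.sum fun _ e => e) + 1 ≤ r.totalDegree := by
  rw [coeff_pderiv] at h
  have h2 : coeff (m + Finsupp.single k 1) r ≠ 0 := right_ne_zero_of_mul h
  have h3 := le_totalDegree (mem_support_iff.mpr h2)
  have h4 : ((m + Finsupp.single k 1).sum fun _ e => e)
      = (m.sum fun _ e => e) + 1 := by
    rw [Finsupp.sum_add_index' (fun _ => rfl) (fun _ _ _ => rfl),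
      Finsupp.sum_single_index rfl]
  omega

lemma totalDegree_pderiv_le {n : ℕ} (r : MvPolynomial (Fin n) ℝ) (j : Fin n) (d : ℕ)
    (h : r.totalDegree ≤ d + 1) : (pderiv j r).totalDegree ≤ d := by
  apply Finset.sup_le
  intro m hm
  have := coeff_pderiv_ne_zero (mem_support_iff.mp hm)
  omega

lemma eq_C_of_totalDegree_eq_zero {n : ℕ} {r : MvPolynomial (Fin n) ℝ}
    (h : r.totalDegree ≤ 0) : r = C (coeff 0 r) := by
  ext m
  rw [coeff_C]
  rcases eq_or_ne (0 : Fin n →₀ ℕ) m with hm | hm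
  · rw [if_pos hm, hm]
  · rw [if_neg hm]
    by_contra hc
    have h3 := le_totalDegree (mem_support_iff.mpr hc)
    have h4 : (m.sum fun _ e => e) = 0 := by omega
    apply hm
    have : m.support = ∅ := by
      by_contra hs
      obtain ⟨a, ha⟩ := Finset.nonempty_iff_ne_empty.mpr hs
      have : 0 < m a := Finsupp.mem_support_iff.mp ha |>.bot_lt
      have : m a ≤ m.sum fun _ e => e := by
        rw [Finsupp.sum]
        exact Finset.single_le_sum (fun i _ => Nat.zero_le _) ha
      omega
    exact (Finsupp.support_eq_empty.mp this).symm

lemma coeff_zero_pderiv_pderiv {n : ℕ} (r : MvPolynomial (Fin n) ℝ) (j k : Fin n) :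
    coeff 0 (pderiv k (pderiv j r)) = coeff 0 (pderiv j (pderiv k r)) := by
  rw [coeff_pderiv, coeff_pderiv, coeff_pderiv, coeff_pderiv]
  have h2 : (0 : Fin n →₀ ℕ) + Finsupp.single k 1 + Finsupp.single j 1
      = 0 + Finsupp.single j 1 + Finsupp.single k 1 := by
    rw [zero_add, zero_add, add_comm]
  rw [h2]
  rcases eq_or_ne j k with h | h
  · subst h; ring
  · simp [Finsupp.add_apply, Finsupp.single_apply, h, Ne.symm h]

lemma pderiv_comm' {n : ℕ} (r : MvPolynomial (Fin n) ℝ) (j l : Fin n) :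
    pderiv j (pderiv l r) = pderiv l (pderiv j r) := by
  ext m
  rw [coeff_pderiv, coeff_pderiv, coeff_pderiv, coeff_pderiv]
  have h2 : m + Finsupp.single l 1 + Finsupp.single j 1
      = m + Finsupp.single j 1 + Finsupp.single l 1 := by
    rw [add_assoc, add_assoc, add_comm (Finsupp.single l 1)]
  rw [h2]
  rcases eq_or_ne j l with h | h
  · subst h; ring
  · simp only [Finsupp.add_apply, Finsupp.single_apply, if_neg h, if_neg (Ne.symm h)]
    push_cast
    ring

lemma eval_affine {n : ℕ} {r : MvPolynomial (Fin n) ℝ}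
    (hconst : ∀ k, pderiv k r = C (coeff 0 (pderiv k r))) (x y : Fin n → ℝ) :
    MvPolynomial.eval y r
      = MvPolynomial.eval x r + ∑ k, coeff 0 (pderiv k r) * (y k - x k) := by
  set c : Fin n → ℝ := fun k => coeff 0 (pderiv k r) with hc
  set D : (Fin n → ℝ) →L[ℝ] ℝ := ∑ k, c k • (ContinuousLinearMap.proj k) with hD
  have hDapp : ∀ v, D v = ∑ k, c k * v k := by intro v; simp [hD]
  set φ : (Fin n → ℝ) → ℝ := fun y => MvPolynomial.eval y r - D y with hφ
  have hdiff : Differentiable ℝ φ := (differentiable_eval r).sub D.differentiable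
  have hfd : ∀ z, fderiv ℝ φ z = 0 := by
    intro z
    have h1 : HasFDerivAt φ (evalD r z - D) z :=
      (hasFDerivAt_eval r z).sub D.hasFDerivAt
    have h2 : evalD r z - D = 0 := by
      ext v
      simp only [ContinuousLinearMap.sub_apply, ContinuousLinearMap.zero_apply,
        evalD_apply, hDapp, sub_eq_zero]
      refine Finset.sum_congr rfl fun k _ => ?_
      rw [hconst k]
      simp [hc]
    rw [h1.fderiv, h2]
  have := is_const_of_fderiv_eq_zero hdiff hfd y x
  simp only [hφ, hDapp] at this
  have hsum : ∑ k, c k * (y k - x k) = (∑ k, c k * y k) - ∑ k, c k * x k := by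
    rw [← Finset.sum_sub_distrib]
    exact Finset.sum_congr rfl fun k _ => by ring
  rw [hsum]
  linarith [this]


lemma sum_mul_single {n : ℕ} (w : Fin n → ℝ) (j : Fin n) :
    ∑ k, w k * (Pi.single j (1:ℝ) : Fin n → ℝ) k = w j := by
  rw [Finset.sum_eq_single j]
  · simp
  · intro k _ hk; simp [Pi.single_eq_of_ne hk]
  · intro h; exact absurd (Finset.mem_univ j) h

/-- determinant symmetry trick -/
lemma det_one_add_eq_det_one_sub {n : ℕ} (Jm S : Matrix (Fin n) (Fin n) ℝ)
    (hJ : Jmᵀ = -Jm) (hS : Sᵀ = S) :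
    (1 + Jm * S).det = (1 - Jm * S).det := by
  have h1 : (1 + Jm * S).det = ((1 + Jm * S)ᵀ).det := (det_transpose _).symm
  have h2 : (1 + Jm * S)ᵀ = 1 - S * Jm := by
    rw [transpose_add, transpose_one, transpose_mul, hS, hJ]
    rw [Matrix.mul_neg, ← sub_eq_add_neg]
  have h3 : (1 - S * Jm).det = (1 - Jm * S).det := by
    have := Matrix.det_one_add_mul_comm (-S) Jm
    rw [Matrix.neg_mul, ← sub_eq_add_neg, Matrix.mul_neg, ← sub_eq_add_neg] at this
    exact this
  rw [h1, h2, h3]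

end KahanAux

open KahanAux

/-- The Kahan map of a cubic Hamiltonian vector field `f = J∇H` preserves the measure
`dx₁∧…∧dx_n / det(I − (ε/2)f'(x))`: the Jacobian determinant of `Φ` at `x` equals
`det(I − (ε/2)f'(Φ(x))) / det(I − (ε/2)f'(x))`. -/
theorem kahan_invariant_measure {n : ℕ}
    (J : Matrix (Fin n) (Fin n) ℝ) (hJ : Jᵀ = -J)
    (p : MvPolynomial (Fin n) ℝ) (hp : p.totalDegree ≤ 3)
    (H : (Fin n → ℝ) → ℝ) (hH : ∀ x, H x = MvPolynomial.eval x p)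
    (g : (Fin n → ℝ) → (Fin n → ℝ)) (hg : ∀ x v, fderiv ℝ H x v = g x ⬝ᵥ v)
    (f : (Fin n → ℝ) → (Fin n → ℝ)) (hf : ∀ x, f x = J.mulVec (g x))
    (M : (Fin n → ℝ) → Matrix (Fin n) (Fin n) ℝ)
    (hM : ∀ x v, (M x).mulVec v = fderiv ℝ f x v)
    (ε : ℝ)
    (Φ : (Fin n → ℝ) → (Fin n → ℝ))
    (hΦ : ∀ x, Φ x = x + ε • ((1 - (ε / 2) • M x)⁻¹.mulVec (f x)))
    (x : Fin n → ℝ)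
    (hx : IsUnit (1 - (ε / 2) • M x).det)
    (hΦx : IsUnit (1 - (ε / 2) • M (Φ x)).det)
    (N : Matrix (Fin n) (Fin n) ℝ) (hN : ∀ v, N.mulVec v = fderiv ℝ Φ x v) :
    N.det = (1 - (ε / 2) • M (Φ x)).det / (1 - (ε / 2) • M x).det := by
  classical
  -- polynomial data
  set q : Fin n → MvPolynomial (Fin n) ℝ := fun i => ∑ j, C (J i j) * pderiv j p with hqdef
  set s : Fin n → Fin n → MvPolynomial (Fin n) ℝ := fun i j => pderiv j (q i) with hsdef
  set c : Fin n → Fin n → Fin n → ℝ := fun i j k => coeff 0 (pderiv k (s i j)) with hcdef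
  -- H is the polynomial
  have hHf : H = fun y => MvPolynomial.eval y p := funext hH
  -- gradient components
  have hgj : ∀ y j, g y j = MvPolynomial.eval y (pderiv j p) := by
    intro y j
    have hfd : fderiv ℝ H y = evalD p y := by
      rw [hHf]; exact (hasFDerivAt_eval p y).fderiv
    have h1 := hg y (Pi.single j 1)
    rw [hfd, dotProduct_single, mul_one] at h1
    rw [← h1, evalD_apply, sum_mul_single]
  -- f is the polynomial map q
  have hfi : ∀ y, f y = fun i => MvPolynomial.eval y (q i) := by
    intro y
    funext i
    rw [hf]
    simp only [Matrix.mulVec, dotProduct, hqdef]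
    rw [map_sum]
    refine Finset.sum_congr rfl fun j _ => ?_
    rw [eval_mul, eval_C, hgj]
  have hff : f = fun y i => MvPolynomial.eval y (q i) := funext hfi
  -- derivative of f
  have hfF : ∀ y, HasFDerivAt f (ContinuousLinearMap.pi (fun i => evalD (q i) y)) y := by
    intro y
    rw [hff]
    exact hasFDerivAt_pi.mpr fun i => hasFDerivAt_eval (q i) y
  -- entries of M
  have hMij : ∀ y i j, M y i j = MvPolynomial.eval y (s i j) := by
    intro y i j
    have h1 := congrFun (hM y (Pi.single j 1)) i
    rw [(hfF y).fderiv] at h1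
    simp only [mulVec_single_one] at h1; change M y i j = _ at h1
    rw [h1]
    show (ContinuousLinearMap.pi (fun i => evalD (q i) y)) (Pi.single j 1) i = _
    rw [ContinuousLinearMap.pi_apply, evalD_apply, sum_mul_single]
  -- degrees
  have hqdeg : ∀ i, (q i).totalDegree ≤ 2 := by
    intro i
    refine le_trans (totalDegree_finset_sum _ _) ?_
    refine Finset.sup_le fun j _ => ?_
    refine le_trans (totalDegree_mul _ _) ?_
    rw [totalDegree_C]
    simpa using totalDegree_pderiv_le p j 2 hp
  have hsdeg : ∀ i j, (s i j).totalDegree ≤ 1 := fun i j =>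
    totalDegree_pderiv_le (q i) j 1 (hqdeg i)
  have hconst : ∀ i j k, pderiv k (s i j) = C (c i j k) := by
    intro i j k
    exact eq_C_of_totalDegree_eq_zero (totalDegree_pderiv_le (s i j) k 0 (hsdeg i j))
  have hcsymm : ∀ i j k, c i j k = c i k j := by
    intro i j k
    simp only [hcdef, hsdef]
    exact coeff_zero_pderiv_pderiv (q i) j k
  -- affine expansion of M
  have hMaff : ∀ y i j, M y i j = M x i j + ∑ k, c i j k * (y k - x k) := by
    intro y i j
    rw [hMij, hMij, eval_affine (fun k => hconst i j k) x y]
  -- the matrix A and its polynomial version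
  set A : (Fin n → ℝ) → Matrix (Fin n) (Fin n) ℝ := fun y => 1 - (ε / 2) • M y with hAdef
  set Amat : Matrix (Fin n) (Fin n) (MvPolynomial (Fin n) ℝ) :=
    Matrix.of fun i j => C ((1 : Matrix (Fin n) (Fin n) ℝ) i j) - C (ε / 2) * s i j with hAmatdef
  have hAmat : ∀ y, A y = Amat.map (MvPolynomial.eval y) := by
    intro y
    ext i j
    simp only [hAdef, Matrix.sub_apply, Matrix.smul_apply, smul_eq_mul, Matrix.map_apply,
      hAmatdef, Matrix.of_apply, map_sub, eval_C, eval_mul, hMij]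
  have hdet : ∀ y, (A y).det = MvPolynomial.eval y Amat.det := by
    intro y
    rw [hAmat y, RingHom.map_det]
    rfl
  have hadj : ∀ y, (A y).adjugate = Amat.adjugate.map (MvPolynomial.eval y) := by
    intro y
    rw [hAmat y]
    have h1 := RingHom.map_adjugate (MvPolynomial.eval y) Amat
    rw [RingHom.mapMatrix_apply, RingHom.mapMatrix_apply] at h1
    exact h1.symm
  have hdetx : (A x).det ≠ 0 := hx.ne_zero
  -- eventually the determinant is nonzero
  have hdetcont : ContinuousAt (fun y => (A y).det) x := by
    have : Continuous (fun y : Fin n → ℝ => MvPolynomial.eval y Amat.det) :=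
      (differentiable_eval _).continuous
    have h2 : (fun y => (A y).det) = fun y => MvPolynomial.eval y Amat.det := funext hdet
    rw [h2]
    exact this.continuousAt
  have hev : ∀ᶠ y in nhds x, (A y).det ≠ 0 := hdetcont.eventually_ne hdetx
  -- explicit formula for Φ where A is invertible
  set Φ' : (Fin n → ℝ) → (Fin n → ℝ) := fun y =>
    y + ε • (((A y).det)⁻¹ • fun i => ∑ j, (A y).adjugate i j * f y j) with hΦ'def
  have hΦeq : ∀ y, (A y).det ≠ 0 → Φ y = Φ' y := by
    intro y hy
    rw [hΦ y, hΦ'def]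
    congr 1
    rw [Matrix.inv_def, Ring.inverse_eq_inv, smul_mulVec]
    rfl
  have hΦev : Φ =ᶠ[nhds x] Φ' := by
    filter_upwards [hev] with y hy
    exact hΦeq y hy
  -- differentiability of Φ'
  have hdiffA : ∀ i j, DifferentiableAt ℝ (fun y => (A y).adjugate i j) x := by
    intro i j
    have h2 : (fun y => (A y).adjugate i j)
        = fun y => MvPolynomial.eval y (Amat.adjugate i j) := by
      funext y; rw [hadj y]; rfl
    rw [h2]
    exact (differentiable_eval _).differentiableAt
  have hdifff : ∀ j, DifferentiableAt ℝ (fun y => f y j) x := by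
    intro j
    have h2 : (fun y => f y j) = fun y => MvPolynomial.eval y (q j) := by
      funext y; rw [hfi y]
    rw [h2]
    exact (differentiable_eval _).differentiableAt
  have hdiffdet : DifferentiableAt ℝ (fun y => (A y).det) x := by
    have h2 : (fun y => (A y).det) = fun y => MvPolynomial.eval y Amat.det := funext hdet
    rw [h2]
    exact (differentiable_eval _).differentiableAt
  have hdiffΦ' : DifferentiableAt ℝ Φ' x := by
    rw [hΦ'def]
    apply differentiableAt_pi.mpr
    intro i
    simp only [Pi.add_apply, Pi.smul_apply, smul_eq_mul]
    apply DifferentiableAt.add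
    · exact ((ContinuousLinearMap.proj i : (Fin n → ℝ) →L[ℝ] ℝ).differentiable).differentiableAt
    · apply DifferentiableAt.const_mul
      apply DifferentiableAt.mul
      · exact hdiffdet.inv hdetx
      · exact DifferentiableAt.fun_sum fun j _ => (hdiffA i j).mul (hdifff j)
  have hdiffΦ : DifferentiableAt ℝ Φ x := hΦev.differentiableAt_iff.mpr hdiffΦ'
  -- the derivative of Φ, componentwise
  set ΦD : (Fin n → ℝ) →L[ℝ] (Fin n → ℝ) := fderiv ℝ Φ x with hΦDdef
  have hΦD : ∀ j, HasFDerivAt (fun y => Φ y j)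
      ((ContinuousLinearMap.proj j : (Fin n → ℝ) →L[ℝ] ℝ).comp ΦD) x := by
    intro j
    exact ((ContinuousLinearMap.proj j : (Fin n → ℝ) →L[ℝ] ℝ)).hasFDerivAt.comp x
      hdiffΦ.hasFDerivAt
  -- differentiate the implicit relation A(y) (Φ(y) - y) = ε f(y)
  have hDL : ∀ i, (∑ j, ((MvPolynomial.eval x (Amat i j)) •
        ((ContinuousLinearMap.proj j : (Fin n → ℝ) →L[ℝ] ℝ).comp ΦD
          - (ContinuousLinearMap.proj j : (Fin n → ℝ) →L[ℝ] ℝ))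
      + (Φ x j - x j) • evalD (Amat i j) x))
      = ε • evalD (q i) x := by
    intro i
    have hL : HasFDerivAt (fun y => ∑ j, MvPolynomial.eval y (Amat i j) * (Φ y j - y j))
        (∑ j, ((MvPolynomial.eval x (Amat i j)) •
            ((ContinuousLinearMap.proj j : (Fin n → ℝ) →L[ℝ] ℝ).comp ΦD
              - (ContinuousLinearMap.proj j : (Fin n → ℝ) →L[ℝ] ℝ))
          + (Φ x j - x j) • evalD (Amat i j) x)) x := by
      apply HasFDerivAt.fun_sum
      intro j _
      exact (hasFDerivAt_eval (Amat i j) x).mul ((hΦD j).sub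
        (ContinuousLinearMap.proj j : (Fin n → ℝ) →L[ℝ] ℝ).hasFDerivAt)
    have hR : HasFDerivAt (fun y => ε * MvPolynomial.eval y (q i))
        (ε • evalD (q i) x) x := (hasFDerivAt_eval (q i) x).const_mul ε
    have heq : (fun y => ∑ j, MvPolynomial.eval y (Amat i j) * (Φ y j - y j))
        =ᶠ[nhds x] (fun y => ε * MvPolynomial.eval y (q i)) := by
      filter_upwards [hev] with y hy
      have h1 : (A y).mulVec (Φ y - y) = ε • f y := by
        rw [hΦ y]
        have h2 : (y + ε • ((1 - (ε / 2) • M y)⁻¹.mulVec (f y))) - y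
            = ε • ((A y)⁻¹.mulVec (f y)) := by
          rw [add_sub_cancel_left, hAdef]
        rw [h2, Matrix.mulVec_smul, mulVec_mulVec,
          Matrix.mul_nonsing_inv _ (isUnit_iff_ne_zero.mpr hy), one_mulVec]
      have h2 := congrFun h1 i
      simp only [Matrix.mulVec, dotProduct, Pi.sub_apply, Pi.smul_apply, smul_eq_mul] at h2
      calc ∑ j, MvPolynomial.eval y (Amat i j) * (Φ y j - y j)
          = ∑ j, A y i j * (Φ y j - y j) := by
            refine Finset.sum_congr rfl fun j _ => ?_
            rw [hAmat y]; rfl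
        _ = ε * f y i := h2
        _ = ε * MvPolynomial.eval y (q i) := by rw [hfi y]
    rw [← hL.fderiv, ← hR.fderiv]
    exact heq.fderiv_eq
  -- evaluate the entries
  have hAe : ∀ i j, MvPolynomial.eval x (Amat i j) = A x i j := by
    intro i j; rw [hAmat x]; rfl
  have hAxe : ∀ i j, A x i j = (1 : Matrix (Fin n) (Fin n) ℝ) i j - (ε/2) * M x i j := by
    intro i j
    rw [hAdef]
    simp [Matrix.sub_apply, Matrix.smul_apply]
  have hDAe : ∀ i j (v : Fin n → ℝ), evalD (Amat i j) x v
      = -(ε/2) * ∑ k, c i j k * v k := by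
    intro i j v
    rw [evalD_apply]
    have hterm : ∀ k : Fin n, MvPolynomial.eval x (pderiv k (Amat i j))
        = -(ε/2) * c i j k := by
      intro k
      have h0 : Amat i j = C ((1 : Matrix (Fin n) (Fin n) ℝ) i j) - C (ε / 2) * s i j := by
        rw [hAmatdef]; rfl
      rw [h0, map_sub, pderiv_C, pderiv_C_mul, hconst]
      simp
    rw [Finset.sum_congr rfl fun k _ => by rw [hterm k], Finset.mul_sum]
    exact Finset.sum_congr rfl fun k _ => by ring
  have hqe : ∀ i (v : Fin n → ℝ), evalD (q i) x v = ∑ k, M x i k * v k := by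
    intro i v
    rw [evalD_apply]
    refine Finset.sum_congr rfl fun k _ => ?_
    rw [hMij]
  -- the scalar key identity
  have hscal : ∀ (v : Fin n → ℝ) i,
      ∑ j, (A x i j * (ΦD v j - v j) + (Φ x j - x j) * (-(ε/2) * ∑ k, c i j k * v k))
      = ε * ∑ k, M x i k * v k := by
    intro v i
    have h1 := congrArg (fun (T : (Fin n → ℝ) →L[ℝ] ℝ) => T v) (hDL i)
    simp only [ContinuousLinearMap.coe_sum', Finset.sum_apply,
      ContinuousLinearMap.add_apply, ContinuousLinearMap.smul_apply,
      ContinuousLinearMap.sub_apply, ContinuousLinearMap.comp_apply,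
      ContinuousLinearMap.proj_apply, smul_eq_mul] at h1
    calc ∑ j, (A x i j * (ΦD v j - v j) + (Φ x j - x j) * (-(ε/2) * ∑ k, c i j k * v k))
        = ∑ j, (MvPolynomial.eval x (Amat i j) * (ΦD v j - v j)
            + (Φ x j - x j) * evalD (Amat i j) x v) := by
          refine Finset.sum_congr rfl fun j _ => ?_
          rw [hAe i j, hDAe i j v]
      _ = ε * evalD (q i) x v := h1
      _ = ε * ∑ k, M x i k * v k := by rw [hqe i v]
  -- identity of ones
  have hone : ∀ (v : Fin n → ℝ) i, ∑ j, (1 : Matrix (Fin n) (Fin n) ℝ) i j * v j = v i := by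
    intro v i
    have h1 := congrFun (one_mulVec v) i
    simpa [Matrix.mulVec, dotProduct] using h1
  -- the key matrix identity A(x) * N = 1 + (ε/2) M(Φ(x))
  have hmv : ∀ v : Fin n → ℝ, (A x * N) *ᵥ v = (1 + (ε/2) • M (Φ x)) *ᵥ v := by
    intro v
    funext i
    have e1 := hscal v i
    have e2 : ∑ j, (A x i j * (ΦD v j - v j)
          + (Φ x j - x j) * (-(ε/2) * ∑ k, c i j k * v k))
        = (∑ j, A x i j * ΦD v j) - (∑ j, A x i j * v j)
          - (ε/2) * ∑ j, ∑ k, (Φ x j - x j) * (c i j k * v k) := by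
      rw [Finset.mul_sum, ← Finset.sum_sub_distrib, ← Finset.sum_sub_distrib]
      refine Finset.sum_congr rfl fun j _ => ?_
      have hws : ∑ k, (Φ x j - x j) * (c i j k * v k)
          = (Φ x j - x j) * ∑ k, c i j k * v k := (Finset.mul_sum _ _ _).symm
      rw [hws]
      ring
    have e1' : (∑ j, A x i j * ΦD v j) - (∑ j, A x i j * v j)
          - (ε/2) * ∑ j, ∑ k, (Φ x j - x j) * (c i j k * v k)
        = ε * ∑ k, M x i k * v k := by
      rw [← e2]; exact e1
    have e3 : ∑ j, A x i j * v j = v i - (ε/2) * ∑ k, M x i k * v k := by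
      calc ∑ j, A x i j * v j
          = ∑ j, ((1 : Matrix (Fin n) (Fin n) ℝ) i j * v j - (ε/2) * (M x i j * v j)) := by
            refine Finset.sum_congr rfl fun j _ => ?_
            rw [hAxe i j]; ring
        _ = (∑ j, (1 : Matrix (Fin n) (Fin n) ℝ) i j * v j)
              - (ε/2) * ∑ j, M x i j * v j := by
            rw [Finset.sum_sub_distrib, Finset.mul_sum]
        _ = v i - (ε/2) * ∑ k, M x i k * v k := by rw [hone v i]
    have e4 : ∑ k, M (Φ x) i k * v k
        = (∑ k, M x i k * v k) + ∑ k, ∑ j, (c i k j * (Φ x j - x j)) * v k := by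
      calc ∑ k, M (Φ x) i k * v k
          = ∑ k, (M x i k * v k + (∑ j, c i k j * (Φ x j - x j)) * v k) := by
            refine Finset.sum_congr rfl fun k _ => ?_
            rw [hMaff (Φ x) i k]; ring
        _ = (∑ k, M x i k * v k) + ∑ k, ∑ j, (c i k j * (Φ x j - x j)) * v k := by
            rw [← Finset.sum_add_distrib]
            refine Finset.sum_congr rfl fun k _ => ?_
            rw [Finset.sum_mul]
    have e5 : ∑ j, ∑ k, (Φ x j - x j) * (c i j k * v k)
        = ∑ k, ∑ j, (c i k j * (Φ x j - x j)) * v k := by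
      rw [Finset.sum_comm]
      refine Finset.sum_congr rfl fun k _ => Finset.sum_congr rfl fun j _ => ?_
      rw [hcsymm i j k]
      ring
    have e0 : ((A x * N) *ᵥ v) i = ∑ j, A x i j * ΦD v j := by
      rw [← mulVec_mulVec, hN v]
      simp [Matrix.mulVec, dotProduct]
    have e6 : ((1 + (ε/2) • M (Φ x)) *ᵥ v) i = v i + (ε/2) * ∑ k, M (Φ x) i k * v k := by
      rw [Matrix.add_mulVec, one_mulVec, Matrix.smul_mulVec]
      simp [Matrix.mulVec, dotProduct]
    rw [e0, e6]
    linear_combination e1' + e3 + (ε/2) * e5 - (ε/2) * e4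
  have hAN : A x * N = 1 + (ε/2) • M (Φ x) := by
    ext i j
    have h1 := congrFun (hmv (Pi.single j 1)) i
    simpa [mulVec_single] using h1
  have hdet1 : (A x).det * N.det = (1 + (ε/2) • M (Φ x)).det := by
    rw [← det_mul, hAN]
  -- the Hamiltonian structure : M = J * S with S symmetric
  set Smat : (Fin n → ℝ) → Matrix (Fin n) (Fin n) ℝ :=
    fun y => Matrix.of fun l j => MvPolynomial.eval y (pderiv j (pderiv l p)) with hSmatdef
  have hsS : ∀ i j, s i j = ∑ l, C (J i l) * pderiv j (pderiv l p) := by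
    intro i j
    show pderiv j (q i) = _
    rw [hqdef]
    simp only [map_sum]
    exact Finset.sum_congr rfl fun l _ => pderiv_C_mul
  have hMS : ∀ y, M y = J * Smat y := by
    intro y
    ext i j
    rw [hMij, Matrix.mul_apply, hsS, map_sum]
    refine Finset.sum_congr rfl fun l _ => ?_
    rw [eval_mul, eval_C]
    rfl
  have hSsym : (Smat (Φ x))ᵀ = Smat (Φ x) := by
    ext l j
    rw [Matrix.transpose_apply]
    show MvPolynomial.eval (Φ x) (pderiv l (pderiv j p))
      = MvPolynomial.eval (Φ x) (pderiv j (pderiv l p))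
    rw [pderiv_comm']
  have hdet2 : (1 + (ε/2) • M (Φ x)).det = (1 - (ε/2) • M (Φ x)).det := by
    have h1 : (ε/2) • M (Φ x) = J * ((ε/2) • Smat (Φ x)) := by
      rw [hMS (Φ x), Matrix.mul_smul]
    rw [h1]
    refine det_one_add_eq_det_one_sub J _ hJ ?_
    rw [transpose_smul, hSsym]
  -- conclude
  rw [eq_div_iff hx.ne_zero, mul_comm]
  rw [show (1 - (ε / 2) • M x) = A x from rfl]
  rw [hdet1]
  exact hdet2
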